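/- Let F be a field with characteristic not equal to 2, and let x be an element of F with x ≠ 1 and x ≠ -1. Set a = -(1-x)²/(2(1+x)), b = (1+x)/2, c = (1+x)/(1-x), d = 4x/(x²-1). Then a·b·c·d = x and a + b + c + d = 1. -/

import Mathlib

theorem stmt9 (F : Type*) [Field F] (h2 : ringChar F ≠ 2) (x : F)
    (hx1 : x ≠ 1) (hx2 : x ≠ -1) :
    let a := -(1 - x)^2 / (2 * (1 + x))
    let b := (1 + x) / 2
    let c := (1 + x) / (1 - x)
    let d := 4 * x / (x^2 - 1)
    a * b * c * d = x ∧ a + b + c + d = 1 := by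
  intro a b c d
  have h2' : (2 : F) ≠ 0 := by
    simpa using Ring.two_ne_zero h2
  have h1 : (1 : F) - x ≠ 0 := sub_ne_zero.mpr (Ne.symm hx1)
  have h1' : (1 : F) + x ≠ 0 := by
    intro h; apply hx2; linear_combination h
  have hsq : x^2 - 1 ≠ 0 := by
    intro h; apply h1; apply mul_left_cancel₀ h1'
    linear_combination -h
  have hden : (-4 + (x ^ 2 * 8 - x ^ 4 * 4) : F) ≠ 0 := by
    intro h
    apply hsq
    have h4 : (4 : F) ≠ 0 := by
      intro h4; apply h2'; apply mul_left_cancel₀ h2'; linear_combination h4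
    have hq : (4 : F) * ((x ^ 2 - 1) ^ 2) = 0 := by linear_combination -h
    have hq2 : ((x ^ 2 - 1) ^ 2 : F) = 0 := by
      rcases mul_eq_zero.mp hq with h' | h'
      · exact absurd h' h4
      · exact h'
    exact pow_eq_zero_iff (two_ne_zero) |>.mp hq2
  constructor
  · simp only [a, b, c, d]
    field_simp
    ring
  · simp only [a, b, c, d]
    field_simp
    ring
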